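/- If I is an F_σ ideal on ℕ and (I, ⊆) is Tukey-reducible to NWD, then I is countably generated. -/

import Mathlib

/-- An ideal of subsets: contains `∅`, closed under subsets and finite unions. -/
def IsIdeal {A : Type*} (I : Set (Set A)) : Prop :=
  ∅ ∈ I ∧ (∀ X ∈ I, ∀ Y, Y ⊆ X → Y ∈ I) ∧ (∀ X ∈ I, ∀ Y ∈ I, X ∪ Y ∈ I)

/-- `S` is σ-bounded in `I`: a countable subfamily of `I` covers every member of `S`. -/
def SigmaBounded {A : Type*} (I S : Set (Set A)) : Prop :=
  ∃ C : Set (Set A), C.Countable ∧ C ⊆ I ∧ ∀ X ∈ S, ∃ Y ∈ C, X ⊆ Y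

/-- Characteristic function, identifying `Set ℕ` with Cantor space. -/
noncomputable def chi (X : Set ℕ) : ℕ → Bool := fun n => @decide (n ∈ X) (Classical.dec _)

/-- An `F_σ` subset of Cantor space: a countable union of closed sets. -/
def IsFSigma (S : Set (ℕ → Bool)) : Prop :=
  ∃ C : ℕ → Set (ℕ → Bool), (∀ n, IsClosed (C n)) ∧ S = ⋃ n, C n

/-- The collection of compact nowhere dense subsets of Cantor space `2^ω`. -/
def NWD : Set (Set (ℕ → Bool)) := {K | IsCompact K ∧ IsNowhereDense K}

/-- A subset of a preorder is unbounded if it has no upper bound. -/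
def Unbounded {P : Type*} [Preorder P] (S : Set P) : Prop := ¬ ∃ b : P, ∀ x ∈ S, x ≤ b

/-- A Tukey map sends unbounded sets to unbounded sets. -/
def IsTukeyMap {P Q : Type*} [Preorder P] [Preorder Q] (f : P → Q) : Prop :=
  ∀ S : Set P, Unbounded S → Unbounded (f '' S)

/-- `P` is Tukey-reducible to `Q`. -/
def TukeyLE (P Q : Type*) [Preorder P] [Preorder Q] : Prop :=
  ∃ f : P → Q, IsTukeyMap f

namespace TukeyNWDAux

/-! ### Cylinder sets in Cantor space -/

/-- Basic clopen cylinder determined by a finite list of bits. -/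
def Cyl (l : List Bool) : Set (ℕ → Bool) := {x | ∀ i, i < l.length → x i = l.getD i false}

lemma cyl_nonempty (l : List Bool) : (Cyl l).Nonempty :=
  ⟨fun i => l.getD i false, fun _ _ => rfl⟩

lemma isOpen_cyl (l : List Bool) : IsOpen (Cyl l) := by
  have h : Cyl l = ⋂ i ∈ Finset.range l.length, {x : ℕ → Bool | x i = l.getD i false} := by
    ext x; simp [Cyl]
  rw [h]
  refine isOpen_biInter_finset fun i _ => ?_
  have h2 : {x : ℕ → Bool | x i = l.getD i false}
      = (fun x : ℕ → Bool => x i) ⁻¹' {l.getD i false} := rfl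
  rw [h2]
  exact IsOpen.preimage (continuous_apply i) (isOpen_discrete _)

lemma exists_cyl_subset {U : Set (ℕ → Bool)} (hU : IsOpen U) {x : ℕ → Bool} (hx : x ∈ U) :
    ∃ l : List Bool, x ∈ Cyl l ∧ Cyl l ⊆ U := by
  obtain ⟨F, u, h1, h2⟩ := isOpen_pi_iff.1 hU x hx
  set n := (F.sup id) + 1 with hn
  refine ⟨List.ofFn (fun i : Fin n => x i), ?_, ?_⟩
  · intro i hi
    rw [List.getD_eq_getElem _ _ hi, List.getElem_ofFn]
  · intro y hy
    apply h2
    intro a ha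
    have han : a < n := Nat.lt_succ_of_le (Finset.le_sup (f := id) ha)
    have : y a = x a := by
      have h3 := hy a (by simpa using Finset.le_sup (f := id) ha)
      rwa [List.getD_eq_getElem _ _ (by simpa using Finset.le_sup (f := id) ha),
        List.getElem_ofFn] at h3
    rw [this]
    exact (h1 a ha).2

lemma avoid {N : Set (ℕ → Bool)} (hNc : IsClosed N) (hN : interior N = ∅) (l : List Bool) :
    ∃ l', Cyl l' ⊆ Cyl l ∧ Cyl l' ∩ N = ∅ := by
  have hne : (Cyl l \ N).Nonempty := by
    by_contra hc
    have hsub : Cyl l ⊆ N := fun z hz => by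
      by_contra hzN; exact hc ⟨z, hz, hzN⟩
    have h2 : Cyl l ⊆ interior N := (isOpen_cyl l).subset_interior_iff.2 hsub
    rw [hN, Set.subset_empty_iff] at h2
    exact (cyl_nonempty l).ne_empty h2
  obtain ⟨x, hx⟩ := hne
  obtain ⟨l', hxl', hl'⟩ := exists_cyl_subset ((isOpen_cyl l).sdiff hNc) hx
  refine ⟨l', fun z hz => (hl' hz).1, ?_⟩
  ext z; simp only [Set.mem_inter_iff, Set.mem_empty_iff_false, iff_false]
  rintro ⟨hz1, hz2⟩; exact (hl' hz1).2 hz2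

/-- Union of two closed sets with empty interior has empty interior. -/
lemma interior_union_eq_empty {X : Type*} [TopologicalSpace X] {s t : Set X}
    (hs : IsClosed s) (hsn : interior s = ∅) (htn : interior t = ∅) :
    interior (s ∪ t) = ∅ := by
  rw [Set.eq_empty_iff_forall_notMem]
  intro x hx
  rcases (Set.eq_empty_or_nonempty (interior (s ∪ t) \ s)).symm with h | h
  · obtain ⟨y, hy⟩ := h
    have hyo : IsOpen (interior (s ∪ t) \ s) := isOpen_interior.sdiff hs
    have hsubt : interior (s ∪ t) \ s ⊆ t := fun z hz =>
      (interior_subset hz.1).resolve_left hz.2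
    have h2 : interior (s ∪ t) \ s ⊆ interior t := hyo.subset_interior_iff.2 hsubt
    rw [htn, Set.subset_empty_iff] at h2
    exact absurd h2 (Set.nonempty_iff_ne_empty.1 ⟨y, hy⟩)
  · have hsubs : interior (s ∪ t) ⊆ s := fun z hz => by
      by_contra hzs
      exact (Set.eq_empty_iff_forall_notMem.1 h z) ⟨hz, hzs⟩
    have h2 : interior (s ∪ t) ⊆ interior s := isOpen_interior.subset_interior_iff.2 hsubs
    rw [hsn, Set.subset_empty_iff] at h2
    exact (Set.eq_empty_iff_forall_notMem.1 h2 x) hx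

lemma finite_union_closed_nwd {E : Set (Set ℕ)} (hE : E.Finite)
    (g : Set ℕ → Set (ℕ → Bool)) (h : ∀ X ∈ E, IsClosed (g X) ∧ interior (g X) = ∅) :
    IsClosed (⋃ X ∈ E, g X) ∧ interior (⋃ X ∈ E, g X) = ∅ := by
  refine Set.Finite.induction_on_subset
    (motive := fun E' _ => IsClosed (⋃ X ∈ E', g X) ∧ interior (⋃ X ∈ E', g X) = ∅) E hE ?_ ?_
  · simp
  · intro a s haE _ _ ih
    rw [Set.biUnion_insert]
    have ha := h a haE
    exact ⟨ha.1.union ih.1, interior_union_eq_empty ha.1 ha.2 ih.2⟩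

/-! ### σ-boundedness helpers -/

lemma chi_eq_true {X : Set ℕ} {a : ℕ} : chi X a = true ↔ a ∈ X := by
  simp [chi]

lemma sb_subset {I S T : Set (Set ℕ)} (h : SigmaBounded I S) (hTS : T ⊆ S) :
    SigmaBounded I T := by
  obtain ⟨C, h1, h2, h3⟩ := h
  exact ⟨C, h1, h2, fun X hX => h3 X (hTS hX)⟩

lemma sb_empty {I : Set (Set ℕ)} : SigmaBounded I (∅ : Set (Set ℕ)) :=
  ⟨∅, Set.countable_empty, Set.empty_subset _, fun X hX => absurd hX (Set.notMem_empty X)⟩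

lemma sb_of_bounded {I S : Set (Set ℕ)} {Y : Set ℕ} (hY : Y ∈ I) (h : ∀ X ∈ S, X ⊆ Y) :
    SigmaBounded I S :=
  ⟨{Y}, Set.countable_singleton Y, by simpa using hY, fun X hX => ⟨Y, rfl, h X hX⟩⟩

lemma sb_iUnion {I : Set (Set ℕ)} {ι : Type} [Countable ι] (T : ι → Set (Set ℕ))
    (h : ∀ i, SigmaBounded I (T i)) : SigmaBounded I (⋃ i, T i) := by
  choose C h1 h2 h3 using h
  refine ⟨⋃ i, C i, Set.countable_iUnion h1, Set.iUnion_subset h2, ?_⟩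
  intro X hX
  obtain ⟨i, hi⟩ := Set.mem_iUnion.1 hX
  obtain ⟨Y, hY, hXY⟩ := h3 i X hi
  exact ⟨Y, Set.mem_iUnion.2 ⟨i, hY⟩, hXY⟩

/-- Key compactness lemma: from unboundedness of `S` in `I`, there is a finite subfamily `F`
of `S` such that no set covering `W ∪ ⋃₀ F` has characteristic function in the closed set
`Cn` (whose members all code sets in `I`). -/
lemma lemA {I : Set (Set ℕ)} {Cn : Set (ℕ → Bool)} (hCn : IsClosed Cn)
    (hB : ∀ x ∈ Cn, {a : ℕ | x a = true} ∈ I)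
    {S : Set (Set ℕ)} (hS : ¬∃ Y ∈ I, ∀ X ∈ S, X ⊆ Y) (W : Set ℕ) :
    ∃ F : Set (Set ℕ), F.Finite ∧ F ⊆ S ∧ ∀ Z : Set ℕ, W ∪ ⋃₀ F ⊆ Z → chi Z ∉ Cn := by
  by_contra hcon
  push_neg at hcon
  have hcon' : ∀ F : Set (Set ℕ), F.Finite → F ⊆ S → ∃ Z, (W ∪ ⋃₀ F ⊆ Z) ∧ chi Z ∈ Cn := by
    intro F h1 h2
    obtain ⟨Z, hZ1, hZ2⟩ := hcon F h1 h2
    exact ⟨Z, hZ1, hZ2⟩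
  have hcoord : ∀ (A : Set ℕ), IsClosed {x : ℕ → Bool | ∀ a ∈ A, x a = true} := by
    intro A
    have h : {x : ℕ → Bool | ∀ a ∈ A, x a = true} = ⋂ a ∈ A, {x : ℕ → Bool | x a = true} := by
      ext x; simp
    rw [h]
    refine isClosed_biInter fun a _ => ?_
    have h2 : {x : ℕ → Bool | x a = true} = (fun x : ℕ → Bool => x a) ⁻¹' {true} := rfl
    rw [h2]
    exact IsClosed.preimage (continuous_apply a) (isClosed_discrete _)
  set A : Set (ℕ → Bool) := Cn ∩ {x | ∀ a ∈ W, x a = true} with hA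
  have hAcomp : IsCompact A := (hCn.inter (hcoord W)).isCompact
  set Z : ↥S → Set (ℕ → Bool) := fun X => {x | ∀ a ∈ X.1, x a = true} with hZdef
  have hmain : (A ∩ ⋂ X : ↥S, Z X).Nonempty := by
    by_contra hemp
    rw [Set.not_nonempty_iff_eq_empty] at hemp
    obtain ⟨u, hu⟩ := hAcomp.elim_finite_subfamily_closed Z (fun X => hcoord X.1) hemp
    set F : Set (Set ℕ) := Subtype.val '' (↑u : Set ↥S) with hF
    have hFfin : F.Finite := (u.finite_toSet).image _
    have hFS : F ⊆ S := by rintro X ⟨x, _, rfl⟩; exact x.2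
    obtain ⟨Z₀, hZ₀, hZ₀C⟩ := hcon' F hFfin hFS
    have hmem : chi Z₀ ∈ A ∩ ⋂ X ∈ u, Z X := by
      refine ⟨⟨hZ₀C, fun a ha => chi_eq_true.2 (hZ₀ (Set.mem_union_left _ ha))⟩, ?_⟩
      simp only [Set.mem_iInter]
      intro X hXu a haX
      refine chi_eq_true.2 (hZ₀ (Set.mem_union_right _ ?_))
      exact ⟨X.1, ⟨X, hXu, rfl⟩, haX⟩
    rw [hu] at hmem
    exact hmem
  obtain ⟨x, hxA, hxZ⟩ := hmain
  have hYI : {a : ℕ | x a = true} ∈ I := hB x hxA.1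
  apply hS
  exact ⟨{a | x a = true}, hYI, fun X hX a haX => Set.mem_iInter.1 hxZ ⟨X, hX⟩ a haX⟩

/-! ### Enumeration of lists of booleans -/

noncomputable def enum (n : ℕ) : List Bool := (Encodable.decode (α := List Bool) n).getD []

lemma enum_surjective : Function.Surjective enum := fun l =>
  ⟨Encodable.encode l, by simp [enum]⟩

/-! ### The recursion state -/

structure St : Type where
  S : Set (Set ℕ)
  E : Set (Set ℕ)
  t : List Bool

def Good (I : Set (Set ℕ)) (a : St) : Prop :=
  ¬SigmaBounded I a.S ∧ a.S ⊆ I ∧ a.E.Finite ∧ a.E ⊆ I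

def Nice (I : Set (Set ℕ)) (g : Set ℕ → Set (ℕ → Bool)) (C : ℕ → Set (ℕ → Bool))
    (k : ℕ) (a b : St) : Prop :=
  b.S ⊆ a.S ∧ a.E ⊆ b.E ∧ Cyl b.t ⊆ Cyl (enum k) ∧
  (∀ X ∈ b.S, g X ∩ Cyl b.t = ∅) ∧ (∀ X ∈ a.E, g X ∩ Cyl b.t = ∅) ∧
  (∀ X ∈ b.E, X ∈ a.E ∨ X ∈ b.S) ∧ (∀ Z : Set ℕ, ⋃₀ b.E ⊆ Z → chi Z ∉ C k)

lemma exists_next {I : Set (Set ℕ)} (g : Set ℕ → Set (ℕ → Bool))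
    (hg : ∀ X ∈ I, IsClosed (g X) ∧ interior (g X) = ∅)
    (C : ℕ → Set (ℕ → Bool)) (hC : ∀ n, IsClosed (C n))
    (hB : ∀ n, ∀ x ∈ C n, {a : ℕ | x a = true} ∈ I)
    (k : ℕ) (a : St) (ha : Good I a) : ∃ b : St, Good I b ∧ Nice I g C k a b := by
  obtain ⟨haS, haSI, haEfin, haEI⟩ := ha
  -- avoid the finitely many already-picked images
  have hN := finite_union_closed_nwd haEfin g (fun X hX => hg X (haEI hX))
  obtain ⟨lc, hlc1, hlc2⟩ := avoid hN.1 hN.2 (enum k)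
  -- split S according to avoided subcylinders of Cyl lc
  set T : List Bool → Set (Set ℕ) :=
    fun l => {X | X ∈ a.S ∧ Cyl l ⊆ Cyl lc ∧ g X ∩ Cyl l = ∅} with hT
  have hcover : a.S ⊆ ⋃ l, T l := by
    intro X hX
    obtain ⟨l, hl1, hl2⟩ := avoid (hg X (haSI hX)).1 (hg X (haSI hX)).2 lc
    refine Set.mem_iUnion.2 ⟨l, hX, hl1, ?_⟩
    rw [Set.inter_comm]
    exact hl2
  have hex : ∃ l, ¬SigmaBounded I (T l) := by
    by_contra hall
    push_neg at hall
    exact haS (sb_subset (sb_iUnion T hall) hcover)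
  obtain ⟨ls, hls⟩ := hex
  have hTne : (T ls).Nonempty := by
    by_contra hne
    rw [Set.not_nonempty_iff_eq_empty] at hne
    exact hls (hne ▸ sb_empty)
  obtain ⟨X₀, _, hsubcyl, _⟩ := hTne
  have hub : ¬∃ Y ∈ I, ∀ X ∈ T ls, X ⊆ Y := by
    rintro ⟨Y, hY, hb⟩
    exact hls (sb_of_bounded hY hb)
  obtain ⟨F, hFfin, hFT, hFkey⟩ := lemA (hC k) (hB k) hub (⋃₀ a.E)
  refine ⟨⟨T ls, a.E ∪ F, ls⟩, ⟨hls, ?_, haEfin.union hFfin, ?_⟩, ?_, ?_, ?_, ?_, ?_, ?_, ?_⟩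
  · exact fun X hX => haSI hX.1
  · exact Set.union_subset haEI (fun X hX => haSI (hFT hX).1)
  · exact fun X hX => hX.1
  · exact Set.subset_union_left
  · exact hsubcyl.trans hlc1
  · exact fun X hX => hX.2.2
  · intro X hX
    rw [Set.eq_empty_iff_forall_notMem]
    rintro z ⟨hz1, hz2⟩
    have hzN : z ∈ ⋃ Y ∈ a.E, g Y := Set.mem_biUnion hX hz1
    have hzz : z ∈ Cyl lc ∩ ⋃ Y ∈ a.E, g Y := ⟨hsubcyl hz2, hzN⟩
    rw [hlc2] at hzz
    exact hzz
  · intro X hX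
    rcases hX with h | h
    · exact Or.inl h
    · exact Or.inr (hFT h)
  · intro Z hZ
    apply hFkey
    rw [Set.sUnion_union] at hZ
    exact hZ

end TukeyNWDAux

open TukeyNWDAux in
/-- If `I` is an `F_σ` ideal on `ℕ` and `(I, ⊆)` is Tukey-reducible to `NWD`, then
`I` is countably generated (σ-bounded in itself). -/
theorem FSigma_Tukey_below_NWD_countably_generated (I : Set (Set ℕ))
    (hI : IsIdeal I) (hFσ : IsFSigma (chi '' I))
    (hT : TukeyLE {X // X ∈ I} {K // K ∈ NWD}) :
    SigmaBounded I I := by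
  classical
  by_contra h
  obtain ⟨f, hf⟩ := hT
  obtain ⟨C, hCcl, hCeq⟩ := hFσ
  -- the induced map on plain sets
  set g : Set ℕ → Set (ℕ → Bool) :=
    fun X => if hX : X ∈ I then (f ⟨X, hX⟩).1 else ∅ with hgdef
  have hgval : ∀ (x : {X // X ∈ I}), g x.1 = (f x).1 := by
    intro x
    have h1 : g x.1 = (f ⟨x.1, x.2⟩).1 := dif_pos x.2
    rw [h1, Subtype.coe_eta]
  have hgNWD : ∀ X ∈ I, IsCompact (g X) ∧ IsNowhereDense (g X) := by
    intro X hX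
    have h1 : g X = (f ⟨X, hX⟩).1 := dif_pos hX
    rw [h1]
    exact (f ⟨X, hX⟩).2
  have hg : ∀ X ∈ I, IsClosed (g X) ∧ interior (g X) = ∅ := by
    intro X hX
    have h1 := hgNWD X hX
    have hcl : IsClosed (g X) := h1.1.isClosed
    exact ⟨hcl, hcl.isNowhereDense_iff.1 h1.2⟩
  -- membership translation for the closed pieces
  have hB : ∀ n, ∀ x ∈ C n, {a : ℕ | x a = true} ∈ I := by
    intro n x hx
    have hx2 : x ∈ chi '' I := by rw [hCeq]; exact Set.mem_iUnion.2 ⟨n, hx⟩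
    obtain ⟨X, hXI, hXx⟩ := hx2
    have : {a : ℕ | x a = true} = X := by
      ext a
      rw [← hXx]
      exact chi_eq_true
    rwa [this]
  -- the recursion
  have hstep0 : ∀ (k : ℕ) (a : St), Good I a → ∃ b : St, Good I b ∧ Nice I g C k a b :=
    fun k a ha => exists_next g hg C hCcl hB k a ha
  choose! stepf hstepf using hstep0
  obtain ⟨seq, hseq0, hseqS⟩ :
      ∃ seq : ℕ → St, seq 0 = ⟨I, ∅, []⟩ ∧ ∀ k, seq (k + 1) = stepf k (seq k) :=
    ⟨fun n => Nat.rec ⟨I, ∅, []⟩ (fun k ih => stepf k ih) n, rfl, fun _ => rfl⟩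
  have hGood : ∀ k, Good I (seq k) := by
    intro k
    induction k with
    | zero => rw [hseq0]; exact ⟨h, le_refl I, Set.finite_empty, Set.empty_subset I⟩
    | succ k ih =>
      rw [hseqS k]
      exact (hstepf k (seq k) ih).1
  have hNice : ∀ k, Nice I g C k (seq k) (seq (k + 1)) := by
    intro k
    rw [hseqS k]
    exact (hstepf k (seq k) (hGood k)).2
  -- monotonicity
  have hSmono : ∀ k m, k ≤ m → (seq m).S ⊆ (seq k).S := by
    intro k m hkm
    induction m, hkm using Nat.le_induction with
    | base => exact le_refl _
    | succ m hkm ih => exact ((hNice m).1).trans ih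
  have hEmono : ∀ k m, k ≤ m → (seq k).E ⊆ (seq m).E := by
    intro k m hkm
    induction m, hkm using Nat.le_induction with
    | base => exact le_refl _
    | succ m hkm ih => exact ih.trans (hNice m).2.1
  -- the diagonal family
  set E : Set (Set ℕ) := ⋃ k, (seq (k + 1)).E with hEdef
  have hEI : E ⊆ I := by
    intro X hX
    obtain ⟨k, hk⟩ := Set.mem_iUnion.1 hX
    exact (hGood (k + 1)).2.2.2 hk
  -- avoidance for all picked sets, at all stages
  have haux : ∀ m, ∀ X ∈ (seq (m + 1)).E, ∀ k ≤ m, g X ∩ Cyl ((seq (k + 1)).t) = ∅ := by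
    intro m
    induction m with
    | zero =>
      intro X hX k hk
      interval_cases k
      rcases (hNice 0).2.2.2.2.2.1 X hX with h0 | h0
      · rw [hseq0] at h0; exact absurd h0 (Set.notMem_empty X)
      · exact (hNice 0).2.2.2.1 X h0
    | succ m ih =>
      intro X hX k hk
      rcases (hNice (m + 1)).2.2.2.2.2.1 X hX with h0 | h0
      · rcases Nat.lt_or_ge k (m + 1) with hk' | hk'
        · exact ih X h0 k (Nat.lt_succ_iff.1 hk')
        · have hkeq : k = m + 1 := le_antisymm hk hk'
          subst hkeq
          exact (hNice (m + 1)).2.2.2.2.1 X h0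
      · have hsub : (seq (m + 2)).S ⊆ (seq (k + 1)).S :=
          hSmono (k + 1) (m + 2) (by omega)
        exact (hNice k).2.2.2.1 X (hsub h0)
  have havoid : ∀ X ∈ E, ∀ k, g X ∩ Cyl ((seq (k + 1)).t) = ∅ := by
    intro X hX k
    obtain ⟨m, hm⟩ := Set.mem_iUnion.1 hX
    rcases Nat.lt_or_ge m k with hmk | hmk
    · -- m + 1 ≤ k : X is already picked at stage k
      have hX' : X ∈ (seq k).E := hEmono (m + 1) k hmk hm
      exact (hNice k).2.2.2.2.1 X hX'
    · exact haux m X hm k hmk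
  -- the family E is unbounded in I
  have hEub : ¬∃ Y ∈ I, ∀ X ∈ E, X ⊆ Y := by
    rintro ⟨Y, hY, hbd⟩
    have hchiY : chi Y ∈ ⋃ n, C n := by rw [← hCeq]; exact ⟨Y, hY, rfl⟩
    obtain ⟨n, hn⟩ := Set.mem_iUnion.1 hchiY
    have hsub : ⋃₀ (seq (n + 1)).E ⊆ Y := by
      intro a ⟨X, hXE, haX⟩
      exact hbd X (Set.mem_iUnion.2 ⟨n, hXE⟩) haX
    exact (hNice n).2.2.2.2.2.2 Y hsub hn
  -- the closure of the union of the images is compact nowhere dense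
  set L : Set (ℕ → Bool) := closure (⋃ X ∈ E, g X) with hLdef
  have hLdisj : ∀ k, Cyl ((seq (k + 1)).t) ∩ L = ∅ := by
    intro k
    have h1 : Cyl ((seq (k + 1)).t) ∩ (⋃ X ∈ E, g X) = ∅ := by
      rw [Set.eq_empty_iff_forall_notMem]
      rintro z ⟨hz1, hz2⟩
      obtain ⟨X, hXE, hzX⟩ := Set.mem_iUnion₂.1 hz2
      have : z ∈ g X ∩ Cyl ((seq (k + 1)).t) := ⟨hzX, hz1⟩
      rw [havoid X hXE k] at this
      exact this
    have h2 := (isOpen_cyl ((seq (k + 1)).t)).inter_closure (t := ⋃ X ∈ E, g X)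
    rw [h1, closure_empty] at h2
    exact Set.subset_empty_iff.1 h2
  have hLnwd : IsNowhereDense L := by
    rw [isClosed_closure.isNowhereDense_iff]
    rw [Set.eq_empty_iff_forall_notMem]
    intro x hx
    obtain ⟨l, hxl, hlsub⟩ := exists_cyl_subset isOpen_interior hx
    obtain ⟨k, hk⟩ := enum_surjective l
    obtain ⟨y, hy⟩ := cyl_nonempty ((seq (k + 1)).t)
    have hyL : y ∈ L := by
      apply interior_subset
      apply hlsub
      rw [← hk]
      exact (hNice k).2.2.1 hy
    have : y ∈ Cyl ((seq (k + 1)).t) ∩ L := ⟨hy, hyL⟩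
    rw [hLdisj k] at this
    exact this
  have hLNWD : L ∈ NWD := ⟨isClosed_closure.isCompact, hLnwd⟩
  -- derive the contradiction via the Tukey map
  set Ehat : Set {X // X ∈ I} := Subtype.val ⁻¹' E with hEhat
  have hEhatUb : Unbounded Ehat := by
    rintro ⟨b, hb⟩
    apply hEub
    refine ⟨b.1, b.2, fun X hX => ?_⟩
    exact hb ⟨X, hEI hX⟩ hX
  have himg := hf Ehat hEhatUb
  apply himg
  refine ⟨⟨L, hLNWD⟩, ?_⟩
  rintro q ⟨x, hx, rfl⟩
  show (f x).1 ≤ L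
  rw [← hgval x]
  calc g x.1 ⊆ ⋃ X ∈ E, g X := Set.subset_biUnion_of_mem hx
    _ ⊆ L := subset_closure
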